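/- For every topological space X, the cellularity of X equals the cellularity of its semiregularization X_sr. -/
import Mathlib


open Topology

/-- The cellularity of a topological space: the supremum of the cardinalities of
families of pairwise disjoint nonempty open sets, plus ℵ₀. -/
noncomputable def cellularity (X : Type u) (t : TopologicalSpace X) : Cardinal.{u} :=
  (⨆ 𝒰 : {𝒰 : Set (Set X) //
      (∀ U ∈ 𝒰, IsOpen[t] U ∧ U.Nonempty) ∧ 𝒰.PairwiseDisjoint id},
    Cardinal.mk 𝒰.1) + Cardinal.aleph0

/-- The semiregularization topology: generated by the regular open sets. -/
def srTop (X : Type u) [TopologicalSpace X] : TopologicalSpace X :=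
  TopologicalSpace.generateFrom {U : Set X | interior (closure U) = U}

section Aux

instance aux_nonempty {X : Type u} (s : TopologicalSpace X) :
    Nonempty {𝒰 : Set (Set X) //
      (∀ U ∈ 𝒰, IsOpen[s] U ∧ U.Nonempty) ∧ 𝒰.PairwiseDisjoint id} :=
  ⟨⟨∅, fun U hU => absurd hU (Set.notMem_empty U), Set.pairwiseDisjoint_empty⟩⟩


variable {X : Type u} [t : TopologicalSpace X]

lemma aux_regular_open (U : Set X) (hU : IsOpen U) :
    interior (closure (interior (closure U))) = interior (closure U) := by
  apply subset_antisymm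
  · exact interior_mono (closure_mono interior_subset) |>.trans
      (by rw [closure_closure])
  · exact interior_mono (closure_mono (hU.subset_interior_closure))
      |>.trans (interior_mono subset_rfl)

lemma aux_disj {U V : Set X} (hU : IsOpen U) (hV : IsOpen V) (h : Disjoint U V) :
    Disjoint (interior (closure U)) (interior (closure V)) := by
  have h1 : Disjoint U (closure V) := by
    rw [Set.disjoint_iff_inter_eq_empty] at h ⊢
    rw [← Set.subset_empty_iff]
    exact hU.inter_closure.trans (by rw [h, closure_empty])
  have h2 : Disjoint (interior (closure V)) (closure U) := by
    rw [Set.disjoint_iff_inter_eq_empty]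
    rw [← Set.subset_empty_iff]
    refine isOpen_interior.inter_closure.trans ?_
    have : interior (closure V) ∩ U = ∅ := by
      rw [Set.disjoint_iff_inter_eq_empty] at h1
      have := Set.inter_subset_inter_right (interior (closure V))
        (hU.subset_interior_closure)
      rw [Set.eq_empty_iff_forall_notMem]
      intro x hx
      have hx2 : x ∈ U ∩ closure V := ⟨hx.2, interior_subset hx.1⟩
      rw [h1] at hx2; exact hx2
    rw [this, closure_empty]
  exact (h2.mono_right interior_subset).symm

lemma aux_sr_le : t ≤ srTop X := by
  rw [srTop, TopologicalSpace.le_generateFrom_iff_subset_isOpen]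
  intro U hU
  rw [← hU]
  exact isOpen_interior

end Aux

/-- For every topological space X, c(X) = c(X_sr). -/
theorem stmt_9 {X : Type u} [t : TopologicalSpace X] :
    cellularity X t = cellularity X (srTop X) := by
  unfold cellularity
  congr 1
  have hbdd : ∀ (s : TopologicalSpace X), BddAbove (Set.range fun 𝒰 : {𝒰 : Set (Set X) //
      (∀ U ∈ 𝒰, IsOpen[s] U ∧ U.Nonempty) ∧ 𝒰.PairwiseDisjoint id} =>
      Cardinal.mk 𝒰.1) := by
    intro s
    refine ⟨2 ^ Cardinal.mk X, ?_⟩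
    rintro c ⟨𝒰, rfl⟩
    calc Cardinal.mk 𝒰.1 ≤ Cardinal.mk (Set X) := Cardinal.mk_set_le _
      _ = 2 ^ Cardinal.mk X := Cardinal.mk_set
  apply le_antisymm
  · apply ciSup_le
    rintro ⟨𝒰, h𝒰, hdisj⟩
    -- map to interiors of closures
    set f : Set X → Set X := fun U => interior (closure U) with hf
    have hinj : Set.InjOn f 𝒰 := by
      intro U hU V hV hUV
      by_contra hne
      have hd := aux_disj (h𝒰 U hU).1 (h𝒰 V hV).1 (hdisj hU hV hne)
      rw [show interior (closure U) = interior (closure V) from hUV] at hd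
      have : (f V).Nonempty :=
        ((h𝒰 V hV).2.mono ((h𝒰 V hV).1.subset_interior_closure))
      rw [disjoint_self] at hd
      exact this.ne_empty hd
    refine le_trans ?_ (le_ciSup (hbdd (srTop X))
      ⟨f '' 𝒰, ?_, ?_⟩)
    · rw [Cardinal.mk_image_eq_of_injOn f 𝒰 hinj]
    · rintro V ⟨U, hU, rfl⟩
      constructor
      · exact TopologicalSpace.isOpen_generateFrom_of_mem
          (aux_regular_open U (h𝒰 U hU).1)
      · exact (h𝒰 U hU).2.mono ((h𝒰 U hU).1.subset_interior_closure)
    · rintro V ⟨U, hU, rfl⟩ W ⟨U', hU', rfl⟩ hne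
      have hne' : U ≠ U' := fun h => hne (by rw [h])
      exact aux_disj (h𝒰 U hU).1 (h𝒰 U' hU').1 (hdisj hU hU' hne')
  · apply ciSup_le
    rintro ⟨𝒰, h𝒰, hdisj⟩
    refine le_ciSup (hbdd t) ⟨𝒰, fun U hU => ⟨?_, (h𝒰 U hU).2⟩, hdisj⟩
    exact aux_sr_le _ (h𝒰 U hU).1
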